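/- Every tree admits a word that is a concatenation of three permutations of its vertex set representing it; that is, the permutation-representation number of any tree is at most 3. -/

import Mathlib

set_option linter.unusedSectionVars false

mutual
inductive PT (V : Type u) : Type u
  | node : V → PTs V → PT V
inductive PTs (V : Type u) : Type u
  | nil : PTs V
  | cons : PT V → PTs V → PTs V
end

namespace PT
variable {V : Type*}

def root : PT V → V
  | .node r _ => r

mutual
def verts : PT V → List V
  | .node r ts => r :: vertsL ts
def vertsL : PTs V → List V
  | .nil => []
  | .cons t ts => verts t ++ vertsL ts
end

def rootsOf : PTs V → List V
  | .nil => []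
  | .cons t ts => t.root :: rootsOf ts

mutual
def a1 : PT V → List V
  | .node r ts => r :: b1L ts
def b1 : PT V → List V
  | .node r ts => a1L ts ++ [r]
def a1L : PTs V → List V
  | .nil => []
  | .cons t ts => a1 t ++ a1L ts
def b1L : PTs V → List V
  | .nil => []
  | .cons t ts => b1 t ++ b1L ts
end

mutual
def a2 : PT V → List V
  | .node r ts => b2preL ts ++ r :: rootsOf ts
def b2pre : PT V → List V
  | .node _ ts => a2Lrev ts
def b2preL : PTs V → List V
  | .nil => []
  | .cons t ts => b2pre t ++ b2preL ts
def a2Lrev : PTs V → List V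
  | .nil => []
  | .cons t ts => a2Lrev ts ++ a2 t
end

mutual
def a3post : PT V → List V
  | .node _ ts => b3Lrev ts
def b3 : PT V → List V
  | .node r ts => rootsOf ts ++ r :: a3postL ts
def b3Lrev : PTs V → List V
  | .nil => []
  | .cons t ts => b3Lrev ts ++ b3 t
def a3postL : PTs V → List V
  | .nil => []
  | .cons t ts => a3post t ++ a3postL ts
end

def b2 (t : PT V) : List V := b2pre t ++ [t.root]

def a3 (t : PT V) : List V := t.root :: a3post t

-- multiset permutation helper
theorem perm_of_coe {l l' : List V} (h : (↑l : Multiset V) = ↑l') : l.Perm l' :=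
  Multiset.coe_eq_coe.1 h

theorem coe_of_perm {l l' : List V} (h : l.Perm l') : (↑l : Multiset V) = ↑l' :=
  Multiset.coe_eq_coe.2 h

mutual
theorem a1_perm : ∀ t : PT V, (a1 t).Perm (verts t)
  | .node r ts => by
    rw [a1, verts]; exact (b1L_perm ts).cons r
theorem b1_perm : ∀ t : PT V, (b1 t).Perm (verts t)
  | .node r ts => by
    rw [b1, verts]
    refine perm_of_coe ?_
    have h := coe_of_perm (a1L_perm ts)
    simp only [← Multiset.coe_add, ← Multiset.cons_coe, ← Multiset.singleton_add] at h ⊢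
    rw [h]; abel
theorem a1L_perm : ∀ ts : PTs V, (a1L ts).Perm (vertsL ts)
  | .nil => List.Perm.refl _
  | .cons t ts => by
    rw [a1L, vertsL]; exact (a1_perm t).append (a1L_perm ts)
theorem b1L_perm : ∀ ts : PTs V, (b1L ts).Perm (vertsL ts)
  | .nil => List.Perm.refl _
  | .cons t ts => by
    rw [b1L, vertsL]; exact (b1_perm t).append (b1L_perm ts)
end

mutual
theorem a2_perm : ∀ t : PT V, (a2 t).Perm (verts t)
  | .node r ts => by
    rw [a2, verts]
    refine perm_of_coe ?_
    have h := coe_of_perm (b2preL_perm ts)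
    simp only [← Multiset.coe_add, ← Multiset.cons_coe, ← Multiset.singleton_add] at h ⊢
    rw [← h]; abel
theorem b2_perm : ∀ t : PT V, (b2pre t ++ [t.root]).Perm (verts t)
  | .node r ts => by
    rw [b2pre, verts, root]
    refine perm_of_coe ?_
    have h := coe_of_perm (a2Lrev_perm ts)
    simp only [← Multiset.coe_add, ← Multiset.cons_coe, ← Multiset.singleton_add] at h ⊢
    rw [h]; abel
theorem b2preL_perm : ∀ ts : PTs V, (b2preL ts ++ rootsOf ts).Perm (vertsL ts)
  | .nil => List.Perm.refl _
  | .cons t ts => by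
    rw [b2preL, vertsL, rootsOf]
    refine perm_of_coe ?_
    have h1 := coe_of_perm (b2_perm t)
    have h2 := coe_of_perm (b2preL_perm ts)
    simp only [← Multiset.coe_add, ← Multiset.cons_coe, ← Multiset.singleton_add] at h1 h2 ⊢
    rw [← h1, ← h2]; abel
theorem a2Lrev_perm : ∀ ts : PTs V, (a2Lrev ts).Perm (vertsL ts)
  | .nil => List.Perm.refl _
  | .cons t ts => by
    rw [a2Lrev, vertsL]
    refine perm_of_coe ?_
    have h1 := coe_of_perm (a2Lrev_perm ts)
    have h2 := coe_of_perm (a2_perm t)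
    simp only [← Multiset.coe_add] at h1 h2 ⊢
    rw [h1, h2]; abel
end

mutual
theorem a3_perm : ∀ t : PT V, (t.root :: a3post t).Perm (verts t)
  | .node r ts => by
    rw [a3post, verts, root]; exact (b3Lrev_perm ts).cons r
theorem b3_perm : ∀ t : PT V, (b3 t).Perm (verts t)
  | .node r ts => by
    rw [b3, verts]
    refine perm_of_coe ?_
    have h := coe_of_perm (a3postL_perm ts)
    simp only [← Multiset.coe_add, ← Multiset.cons_coe, ← Multiset.singleton_add] at h ⊢
    rw [← h]; abel
theorem b3Lrev_perm : ∀ ts : PTs V, (b3Lrev ts).Perm (vertsL ts)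
  | .nil => List.Perm.refl _
  | .cons t ts => by
    rw [b3Lrev, vertsL]
    refine perm_of_coe ?_
    have h1 := coe_of_perm (b3Lrev_perm ts)
    have h2 := coe_of_perm (b3_perm t)
    simp only [← Multiset.coe_add] at h1 h2 ⊢
    rw [h1, h2]; abel
theorem a3postL_perm : ∀ ts : PTs V, (rootsOf ts ++ a3postL ts).Perm (vertsL ts)
  | .nil => List.Perm.refl _
  | .cons t ts => by
    rw [a3postL, vertsL, rootsOf]
    refine perm_of_coe ?_
    have h1 := coe_of_perm (a3_perm t)
    have h2 := coe_of_perm (a3postL_perm ts)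
    simp only [← Multiset.coe_add, ← Multiset.cons_coe, ← Multiset.singleton_add] at h1 h2 ⊢
    rw [← h1, ← h2]; abel

end

def rootEdges (r : V) : PTs V → List (V × V)
  | .nil => []
  | .cons t ts => (r, t.root) :: rootEdges r ts

mutual
def edges : PT V → List (V × V)
  | .node r ts => rootEdges r ts ++ edgesL ts
def edgesL : PTs V → List (V × V)
  | .nil => []
  | .cons t ts => edges t ++ edgesL ts
end

theorem root_mem : ∀ t : PT V, t.root ∈ verts t
  | .node r ts => by rw [root, verts]; exact List.mem_cons_self

theorem mem_rootEdges {r x y : V} : ∀ {ts : PTs V},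
    (x, y) ∈ rootEdges r ts ↔ x = r ∧ y ∈ rootsOf ts
  | .nil => by simp [rootEdges, rootsOf]
  | .cons t ts => by
    simp [rootEdges, rootsOf, @mem_rootEdges r x y ts, Prod.ext_iff]
    tauto

theorem mem_of_rootsOf {y : V} : ∀ {ts : PTs V}, y ∈ rootsOf ts → y ∈ vertsL ts
  | .nil, h => by simp [rootsOf] at h
  | .cons t ts, h => by
    rw [rootsOf] at h
    rw [vertsL, List.mem_append]
    rcases List.mem_cons.1 h with rfl | h'
    · exact Or.inl (root_mem t)
    · exact Or.inr (mem_of_rootsOf h')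

mutual
theorem mem_of_edges {x y : V} : ∀ {t : PT V}, (x, y) ∈ edges t → x ∈ verts t ∧ y ∈ verts t
  | .node r ts, h => by
    rw [edges, List.mem_append] at h
    rw [verts]
    rcases h with h | h
    · obtain ⟨rfl, hy⟩ := mem_rootEdges.1 h
      exact ⟨List.mem_cons_self, List.mem_cons_of_mem _ (mem_of_rootsOf hy)⟩
    · obtain ⟨hx, hy⟩ := mem_of_edgesL h
      exact ⟨List.mem_cons_of_mem _ hx, List.mem_cons_of_mem _ hy⟩
theorem mem_of_edgesL {x y : V} : ∀ {ts : PTs V}, (x, y) ∈ edgesL ts → x ∈ vertsL ts ∧ y ∈ vertsL ts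
  | .cons t ts, h => by
    rw [edgesL, List.mem_append] at h
    rw [vertsL]
    rcases h with h | h
    · obtain ⟨hx, hy⟩ := mem_of_edges h
      exact ⟨List.mem_append_left _ hx, List.mem_append_left _ hy⟩
    · obtain ⟨hx, hy⟩ := mem_of_edgesL h
      exact ⟨List.mem_append_right _ hx, List.mem_append_right _ hy⟩
end

theorem adj_root_iff {r b : V} {ts : PTs V} (hr : r ∉ vertsL ts) (hbr : b ≠ r) :
    ((r, b) ∈ edges (PT.node r ts) ∨ (b, r) ∈ edges (PT.node r ts)) ↔ b ∈ rootsOf ts := by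
  rw [edges]
  simp only [List.mem_append, mem_rootEdges]
  constructor
  · rintro ((⟨-, h⟩ | h) | (⟨rfl, -⟩ | h))
    · exact h
    · exact absurd (mem_of_edgesL h).1 hr
    · exact absurd rfl hbr
    · exact absurd (mem_of_edgesL h).2 hr
  · intro h; exact Or.inl (Or.inl ⟨trivial, h⟩)

theorem adj_sub_iff {a b : V} {r : V} {ts : PTs V} (ha : a ∈ vertsL ts) (hb : b ∈ vertsL ts)
    (hr : r ∉ vertsL ts) :
    (((a, b) ∈ edges (PT.node r ts) ∨ (b, a) ∈ edges (PT.node r ts)) ↔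
      ((a, b) ∈ edgesL ts ∨ (b, a) ∈ edgesL ts)) := by
  rw [edges]
  simp only [List.mem_append, mem_rootEdges]
  constructor
  · rintro ((⟨rfl, -⟩ | h) | (⟨rfl, -⟩ | h))
    · exact absurd ha hr
    · exact Or.inl h
    · exact absurd hb hr
    · exact Or.inr h
  · rintro (h | h)
    · exact Or.inl (Or.inr h)
    · exact Or.inr (Or.inr h)


end PT

def F {V : Type*} [DecidableEq V] (w : List V) (a b : V) : List V :=
  w.filter fun x => decide (x = a ∨ x = b)

namespace F
variable {V : Type*} [DecidableEq V] {a b : V} {l l' : List V}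

theorem append (l l' : List V) (a b : V) : F (l ++ l') a b = F l a b ++ F l' a b :=
  List.filter_append ..

theorem comm (l : List V) (a b : V) : F l a b = F l b a := by
  apply List.filter_congr
  intro x _
  simp [or_comm]

theorem nil : F ([] : List V) a b = [] := rfl

theorem cons (x : V) (xs : List V) :
    F (x :: xs) a b = if x = a ∨ x = b then x :: F xs a b else F xs a b := by
  by_cases h : x = a ∨ x = b <;> simp [F, List.filter_cons, h]

theorem eq_nil (ha : a ∉ l) (hb : b ∉ l) : F l a b = [] := by
  apply List.filter_eq_nil_iff.2
  intro x hx
  simp only [decide_eq_true_eq]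
  rintro (rfl | rfl) <;> [exact ha hx; exact hb hx]

theorem singleton (r a b : V) :
    F [r] a b = if r = a ∨ r = b then [r] else [] := by
  rw [show ([r] : List V) = r :: [] from rfl, cons]; rfl

theorem single_mem (hn : l.Nodup) (ha : a ∈ l) (hb : b ∉ l) : F l a b = [a] := by
  induction l with
  | nil => simp at ha
  | cons x xs ih =>
    simp only [List.mem_cons, not_or] at hb
    rw [cons]
    rcases List.mem_cons.1 ha with rfl | ha'
    · rw [if_pos (Or.inl rfl), eq_nil (List.nodup_cons.1 hn).1 hb.2]
    · have hxa : x ≠ a := by rintro rfl; exact (List.nodup_cons.1 hn).1 ha'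
      rw [if_neg (by rintro (rfl | rfl); exacts [hxa rfl, hb.1 rfl]),
        ih (List.nodup_cons.1 hn).2 ha' hb.2]

theorem pair (hn : l.Nodup) (ha : a ∈ l) (hb : b ∈ l) (hab : a ≠ b) :
    F l a b = [a, b] ∨ F l a b = [b, a] := by
  induction l with
  | nil => simp at ha
  | cons x xs ih =>
    have hn1 := (List.nodup_cons.1 hn).1
    have hn2 := (List.nodup_cons.1 hn).2
    rw [cons]
    rcases List.mem_cons.1 ha with rfl | ha'
    · have hb' : b ∈ xs := (List.mem_cons.1 hb).resolve_left (fun h => hab h.symm) 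
      rw [if_pos (Or.inl rfl), comm, single_mem hn2 hb' hn1]
      left; rfl
    · rcases List.mem_cons.1 hb with rfl | hb'
      · rw [if_pos (Or.inr rfl), single_mem hn2 ha' hn1]
        right; rfl
      · have hxa : ¬(x = a ∨ x = b) := by
          rintro (rfl | rfl) <;> [exact hn1 ha'; exact hn1 hb']
        rw [if_neg hxa]
        exact ih hn2 ha' hb'

end F

namespace F
variable {V : Type*} [DecidableEq V] {a b x : V} {l : List V}

theorem cons_of_ne (hxa : x ≠ a) (hxb : x ≠ b) : F (x :: l) a b = F l a b := by
  rw [cons, if_neg (by rintro (rfl | rfl); exacts [hxa rfl, hxb rfl])]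

theorem cons_left (x : V) (l : List V) : F (x :: l) x b = x :: F l x b := by
  rw [cons, if_pos (Or.inl rfl)]

theorem single_mem' {a b : V} (hn : l.Nodup) (ha : a ∉ l) (hb : b ∈ l) : F l a b = [b] := by
  rw [comm]
  exact single_mem hn hb ha

end F

namespace PT
variable {V : Type*} [DecidableEq V]

def Crit (l1 l2 l3 : List V) (a b : V) : Prop :=
  F l1 a b = F l2 a b ∧ F l2 a b = F l3 a b

theorem Crit.swap {l1 l2 l3 : List V} {a b : V} : Crit l1 l2 l3 a b ↔ Crit l1 l2 l3 b a := by
  unfold Crit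
  rw [F.comm l1 a b, F.comm l2 a b, F.comm l3 a b]

theorem Fp_nil {l m : List V} (hp : l.Perm m) {a b : V} (ha : a ∉ m) (hb : b ∉ m) :
    F l a b = [] :=
  F.eq_nil (fun h => ha (hp.mem_iff.1 h)) (fun h => hb (hp.mem_iff.1 h))

theorem Fp_single {l m : List V} (hp : l.Perm m) (hn : m.Nodup) {a b : V}
    (ha : a ∈ m) (hb : b ∉ m) : F l a b = [a] :=
  F.single_mem (hp.nodup_iff.2 hn) (hp.mem_iff.2 ha) (fun h => hb (hp.mem_iff.1 h))

theorem Fp_single' {l m : List V} (hp : l.Perm m) (hn : m.Nodup) {a b : V}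
    (ha : a ∉ m) (hb : b ∈ m) : F l a b = [b] := by
  rw [F.comm]
  exact Fp_single hp hn hb ha

theorem mem_b2preL_sub {x : V} {ts : PTs V} (h : x ∈ b2preL ts) : x ∈ vertsL ts :=
  (b2preL_perm ts).subset (List.mem_append_left _ h)

theorem mem_a3postL_sub {x : V} {ts : PTs V} (h : x ∈ a3postL ts) : x ∈ vertsL ts :=
  (a3postL_perm ts).subset (List.mem_append_right _ h)

theorem mem_b2pre_sub {x : V} {t : PT V} (h : x ∈ b2pre t) : x ∈ verts t :=
  (b2_perm t).subset (List.mem_append_left _ h)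

theorem mem_a3post_sub {x : V} {t : PT V} (h : x ∈ a3post t) : x ∈ verts t :=
  (a3_perm t).subset (List.mem_cons_of_mem _ h)

theorem key_a_root (r : V) (ts : PTs V) (hnl : (vertsL ts).Nodup) (hr : r ∉ vertsL ts)
    {b : V} (hb : b ∈ vertsL ts) (hbr : b ≠ r) :
    (((r, b) ∈ edges (PT.node r ts) ∨ (b, r) ∈ edges (PT.node r ts)) ↔
      Crit (a1 (PT.node r ts)) (a2 (PT.node r ts)) (a3 (PT.node r ts)) r b) := by
  rw [adj_root_iff hr hbr]
  have h1 : F (a1 (PT.node r ts)) r b = [r, b] := by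
    rw [a1, F.cons_left, Fp_single' (b1L_perm ts) hnl hr hb]
  have h3 : F (a3 (PT.node r ts)) r b = [r, b] := by
    rw [a3, a3post, root, F.cons_left, Fp_single' (b3Lrev_perm ts) hnl hr hb]
  have hsplit : (b2preL ts ++ rootsOf ts).Nodup := (b2preL_perm ts).nodup_iff.2 hnl
  obtain ⟨hnp, hnr, hdisj⟩ := List.nodup_append.1 hsplit
  have hbmem : b ∈ b2preL ts ++ rootsOf ts := (b2preL_perm ts).mem_iff.2 hb
  have hrp : r ∉ b2preL ts := fun h => hr (mem_b2preL_sub h)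
  have hrr : r ∉ rootsOf ts := fun h => hr (mem_of_rootsOf h)
  by_cases hroot : b ∈ rootsOf ts
  · have h2 : F (a2 (PT.node r ts)) r b = [r, b] := by
      rw [a2, F.append, F.eq_nil hrp (fun h => hdisj _ h _ hroot rfl), F.cons_left,
        F.single_mem' hnr hrr hroot]
      rfl
    simp [Crit, h1, h2, h3, hroot]
  · have hbp : b ∈ b2preL ts := by
      rcases List.mem_append.1 hbmem with h | h
      exacts [h, absurd h hroot]
    have h2 : F (a2 (PT.node r ts)) r b = [b, r] := by
      rw [a2, F.append, F.single_mem' hnp hrp hbp, F.cons_left, F.eq_nil hrr hroot]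
      rfl
    simp only [Crit, h1, h2, h3, iff_false_intro hroot, false_iff, not_and]
    intro h
    simp at h
    exact absurd h.1 (Ne.symm hbr)

theorem key_b_root (r : V) (ts : PTs V) (hnl : (vertsL ts).Nodup) (hr : r ∉ vertsL ts)
    {b : V} (hb : b ∈ vertsL ts) (hbr : b ≠ r) :
    (((r, b) ∈ edges (PT.node r ts) ∨ (b, r) ∈ edges (PT.node r ts)) ↔
      Crit (b1 (PT.node r ts)) (b2 (PT.node r ts)) (b3 (PT.node r ts)) r b) := by
  rw [adj_root_iff hr hbr]
  have h1 : F (b1 (PT.node r ts)) r b = [b, r] := by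
    rw [b1, F.append, Fp_single' (a1L_perm ts) hnl hr hb, F.cons_left]
    rfl
  have h2 : F (b2 (PT.node r ts)) r b = [b, r] := by
    rw [b2, b2pre, root, F.append, Fp_single' (a2Lrev_perm ts) hnl hr hb, F.cons_left]
    rfl
  have hsplit : (rootsOf ts ++ a3postL ts).Nodup := (a3postL_perm ts).nodup_iff.2 hnl
  obtain ⟨hnr, hnp, hdisj⟩ := List.nodup_append.1 hsplit
  have hbmem : b ∈ rootsOf ts ++ a3postL ts := (a3postL_perm ts).mem_iff.2 hb
  have hrp : r ∉ a3postL ts := fun h => hr (mem_a3postL_sub h)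
  have hrr : r ∉ rootsOf ts := fun h => hr (mem_of_rootsOf h)
  by_cases hroot : b ∈ rootsOf ts
  · have h3 : F (b3 (PT.node r ts)) r b = [b, r] := by
      rw [b3, F.append, F.single_mem' hnr hrr hroot, F.cons_left,
        F.eq_nil hrp (fun h => hdisj _ hroot _ h rfl)]
      rfl
    simp [Crit, h1, h2, h3, hroot]
  · have hbp : b ∈ a3postL ts := by
      rcases List.mem_append.1 hbmem with h | h
      exacts [absurd h hroot, h]
    have h3 : F (b3 (PT.node r ts)) r b = [r, b] := by
      rw [b3, F.append, F.eq_nil hrr hroot, F.cons_left, F.single_mem' hnp hrp hbp]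
      rfl
    simp only [Crit, h1, h2, h3, iff_false_intro hroot, false_iff, not_and]
    intro _ h
    simp at h
    exact absurd h.1 hbr


mutual

theorem key_a : ∀ t : PT V, (verts t).Nodup → ∀ a b : V, a ≠ b → a ∈ verts t → b ∈ verts t →
    (((a, b) ∈ edges t ∨ (b, a) ∈ edges t) ↔ Crit (a1 t) (a2 t) (a3 t) a b)
  | .node r ts => by
    intro hn a b hab ha hb
    rw [verts, List.nodup_cons] at hn
    obtain ⟨hr, hnl⟩ := hn
    rw [verts, List.mem_cons] at ha hb
    rcases ha with rfl | ha' <;> rcases hb with rfl | hb'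
    · exact absurd rfl hab
    · exact key_a_root a ts hnl hr hb' (Ne.symm hab)
    · rw [or_comm, Crit.swap]
      exact key_a_root b ts hnl hr ha' hab
    · have hra : r ≠ a := fun h => hr (h ▸ ha')
      have hrb : r ≠ b := fun h => hr (h ▸ hb')
      rw [adj_sub_iff ha' hb' hr, key_bL ts hnl a b hab ha' hb']
      have e1 : F (a1 (PT.node r ts)) a b = F (b1L ts) a b := by
        rw [a1, F.cons_of_ne hra hrb]
      have e2 : F (a2 (PT.node r ts)) a b = F (b2preL ts ++ rootsOf ts) a b := by
        rw [a2, F.append, F.cons_of_ne hra hrb, F.append]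
      have e3 : F (a3 (PT.node r ts)) a b = F (b3Lrev ts) a b := by
        rw [a3, root, a3post, F.cons_of_ne hra hrb]
      unfold Crit
      rw [e1, e2, e3]

theorem key_b : ∀ t : PT V, (verts t).Nodup → ∀ a b : V, a ≠ b → a ∈ verts t → b ∈ verts t →
    (((a, b) ∈ edges t ∨ (b, a) ∈ edges t) ↔ Crit (b1 t) (b2 t) (b3 t) a b)
  | .node r ts => by
    intro hn a b hab ha hb
    rw [verts, List.nodup_cons] at hn
    obtain ⟨hr, hnl⟩ := hn
    rw [verts, List.mem_cons] at ha hb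
    rcases ha with rfl | ha' <;> rcases hb with rfl | hb'
    · exact absurd rfl hab
    · exact key_b_root a ts hnl hr hb' (Ne.symm hab)
    · rw [or_comm, Crit.swap]
      exact key_b_root b ts hnl hr ha' hab
    · have hra : r ≠ a := fun h => hr (h ▸ ha')
      have hrb : r ≠ b := fun h => hr (h ▸ hb')
      rw [adj_sub_iff ha' hb' hr, key_aL ts hnl a b hab ha' hb']
      have e1 : F (b1 (PT.node r ts)) a b = F (a1L ts) a b := by
        rw [b1, F.append, F.singleton, if_neg (by rintro (rfl | rfl); exacts [hra rfl, hrb rfl]),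
          List.append_nil]
      have e2 : F (b2 (PT.node r ts)) a b = F (a2Lrev ts) a b := by
        rw [b2, root, b2pre, F.append, F.singleton,
          if_neg (by rintro (rfl | rfl); exacts [hra rfl, hrb rfl]), List.append_nil]
      have e3 : F (b3 (PT.node r ts)) a b = F (rootsOf ts ++ a3postL ts) a b := by
        rw [b3, F.append, F.cons_of_ne hra hrb, F.append]
      unfold Crit
      rw [e1, e2, e3]

theorem key_aL : ∀ ts : PTs V, (vertsL ts).Nodup → ∀ a b : V, a ≠ b → a ∈ vertsL ts →
    b ∈ vertsL ts →
    (((a, b) ∈ edgesL ts ∨ (b, a) ∈ edgesL ts) ↔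
      Crit (a1L ts) (a2Lrev ts) (rootsOf ts ++ a3postL ts) a b)
  | .nil => by
    intro _ a b _ ha
    simp [vertsL] at ha
  | .cons t ts => by
    intro hn a b hab ha hb
    rw [vertsL, List.nodup_append] at hn
    obtain ⟨hnt, hns, hdisj⟩ := hn
    rw [vertsL, List.mem_append] at ha hb
    rw [edgesL, a1L, a2Lrev, rootsOf, a3postL]
    rcases ha with ha | ha <;> rcases hb with hb | hb
    · -- both in verts t
      have hat : a ∉ vertsL ts := fun h => hdisj _ ha _ h rfl
      have hbt : b ∉ vertsL ts := fun h => hdisj _ hb _ h rfl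
      have hL : (((a, b) ∈ edges t ++ edgesL ts ∨ (b, a) ∈ edges t ++ edgesL ts) ↔
          ((a, b) ∈ edges t ∨ (b, a) ∈ edges t)) := by
        simp only [List.mem_append]
        constructor
        · rintro ((h | h) | (h | h))
          exacts [Or.inl h, absurd (mem_of_edgesL h).1 hat, Or.inr h,
            absurd (mem_of_edgesL h).2 hat]
        · tauto
      rw [hL, key_a t hnt a b hab ha hb]
      have e1 : F (a1 t ++ a1L ts) a b = F (a1 t) a b := by
        rw [F.append, Fp_nil (a1L_perm ts) hat hbt, List.append_nil]
      have e2 : F (a2Lrev ts ++ a2 t) a b = F (a2 t) a b := by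
        rw [F.append, Fp_nil (a2Lrev_perm ts) hat hbt, List.nil_append]
      have e3 : F ((t.root :: rootsOf ts) ++ (a3post t ++ a3postL ts)) a b = F (a3 t) a b := by
        rw [show (t.root :: rootsOf ts) ++ (a3post t ++ a3postL ts)
            = t.root :: (rootsOf ts ++ (a3post t ++ a3postL ts)) from rfl, a3, F.cons, F.cons,
          F.append, F.append,
          F.eq_nil (fun h => hat (mem_of_rootsOf h)) (fun h => hbt (mem_of_rootsOf h)),
          F.eq_nil (fun h => hat (mem_a3postL_sub h)) (fun h => hbt (mem_a3postL_sub h)),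
          List.nil_append, List.append_nil]
      unfold Crit
      rw [e1, e2, e3]
    · -- a in subtree t, b in rest : cross pair
      have hat : a ∉ vertsL ts := fun h => hdisj _ ha _ h rfl
      have hbt : b ∉ verts t := fun h => hdisj _ h _ hb rfl
      have h1 : F (a1 t ++ a1L ts) a b = [a, b] := by
        rw [F.append, Fp_single (a1_perm t) hnt ha hbt, Fp_single' (a1L_perm ts) hns hat hb]
        rfl
      have h2 : F (a2Lrev ts ++ a2 t) a b = [b, a] := by
        rw [F.append, Fp_single' (a2Lrev_perm ts) hns hat hb, Fp_single (a2_perm t) hnt ha hbt]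
        rfl
      constructor
      · rintro (h | h) <;> rcases List.mem_append.1 h with h' | h'
        · exact absurd (mem_of_edges h').2 hbt
        · exact absurd (mem_of_edgesL h').1 hat
        · exact absurd (mem_of_edges h').1 hbt
        · exact absurd (mem_of_edgesL h').2 hat
      · rintro ⟨h12, -⟩
        rw [h1, h2] at h12
        simp at h12
        exact absurd h12.1 hab
    · -- b in subtree t, a in rest
      have hbt : b ∉ vertsL ts := fun h => hdisj _ hb _ h rfl
      have hat : a ∉ verts t := fun h => hdisj _ h _ ha rfl
      have h1 : F (a1 t ++ a1L ts) a b = [b, a] := by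
        rw [F.append, Fp_single' (a1_perm t) hnt hat hb, Fp_single (a1L_perm ts) hns ha hbt]
        rfl
      have h2 : F (a2Lrev ts ++ a2 t) a b = [a, b] := by
        rw [F.append, Fp_single (a2Lrev_perm ts) hns ha hbt, Fp_single' (a2_perm t) hnt hat hb]
        rfl
      constructor
      · rintro (h | h) <;> rcases List.mem_append.1 h with h' | h'
        · exact absurd (mem_of_edges h').1 hat
        · exact absurd (mem_of_edgesL h').2 hbt
        · exact absurd (mem_of_edges h').2 hat
        · exact absurd (mem_of_edgesL h').1 hbt
      · rintro ⟨h12, -⟩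
        rw [h1, h2] at h12
        simp at h12
        exact absurd h12.1 (Ne.symm hab)
    · -- both in rest
      have hat : a ∉ verts t := fun h => hdisj _ h _ ha rfl
      have hbt : b ∉ verts t := fun h => hdisj _ h _ hb rfl
      have hL : (((a, b) ∈ edges t ++ edgesL ts ∨ (b, a) ∈ edges t ++ edgesL ts) ↔
          ((a, b) ∈ edgesL ts ∨ (b, a) ∈ edgesL ts)) := by
        simp only [List.mem_append]
        constructor
        · rintro ((h | h) | (h | h))
          exacts [absurd (mem_of_edges h).1 hat, Or.inl h,
            absurd (mem_of_edges h).1 hbt, Or.inr h]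
        · tauto
      rw [hL, key_aL ts hns a b hab ha hb]
      have hroott : t.root ≠ a ∧ t.root ≠ b := by
        constructor <;> rintro rfl
        exacts [hat (root_mem t), hbt (root_mem t)]
      have e1 : F (a1 t ++ a1L ts) a b = F (a1L ts) a b := by
        rw [F.append, Fp_nil (a1_perm t) hat hbt, List.nil_append]
      have e2 : F (a2Lrev ts ++ a2 t) a b = F (a2Lrev ts) a b := by
        rw [F.append, Fp_nil (a2_perm t) hat hbt, List.append_nil]
      have e3 : F ((t.root :: rootsOf ts) ++ (a3post t ++ a3postL ts)) a b =
          F (rootsOf ts ++ a3postL ts) a b := by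
        rw [F.append, F.append, F.cons_of_ne hroott.1 hroott.2,
          F.eq_nil (fun h => hat (mem_a3post_sub h)) (fun h => hbt (mem_a3post_sub h)),
          List.nil_append, F.append]
      unfold Crit
      rw [e1, e2, e3]

theorem key_bL : ∀ ts : PTs V, (vertsL ts).Nodup → ∀ a b : V, a ≠ b → a ∈ vertsL ts →
    b ∈ vertsL ts →
    (((a, b) ∈ edgesL ts ∨ (b, a) ∈ edgesL ts) ↔
      Crit (b1L ts) (b2preL ts ++ rootsOf ts) (b3Lrev ts) a b)
  | .nil => by
    intro _ a b _ ha
    simp [vertsL] at ha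
  | .cons t ts => by
    intro hn a b hab ha hb
    rw [vertsL, List.nodup_append] at hn
    obtain ⟨hnt, hns, hdisj⟩ := hn
    rw [vertsL, List.mem_append] at ha hb
    rw [edgesL, b1L, b2preL, rootsOf, b3Lrev]
    rcases ha with ha | ha <;> rcases hb with hb | hb
    · -- both in verts t
      have hat : a ∉ vertsL ts := fun h => hdisj _ ha _ h rfl
      have hbt : b ∉ vertsL ts := fun h => hdisj _ hb _ h rfl
      have hL : (((a, b) ∈ edges t ++ edgesL ts ∨ (b, a) ∈ edges t ++ edgesL ts) ↔
          ((a, b) ∈ edges t ∨ (b, a) ∈ edges t)) := by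
        simp only [List.mem_append]
        constructor
        · rintro ((h | h) | (h | h))
          exacts [Or.inl h, absurd (mem_of_edgesL h).1 hat, Or.inr h,
            absurd (mem_of_edgesL h).2 hat]
        · tauto
      rw [hL, key_b t hnt a b hab ha hb]
      have e1 : F (b1 t ++ b1L ts) a b = F (b1 t) a b := by
        rw [F.append, Fp_nil (b1L_perm ts) hat hbt, List.append_nil]
      have e3 : F (b3Lrev ts ++ b3 t) a b = F (b3 t) a b := by
        rw [F.append, Fp_nil (b3Lrev_perm ts) hat hbt, List.nil_append]
      have e2 : F ((b2pre t ++ b2preL ts) ++ (t.root :: rootsOf ts)) a b = F (b2 t) a b := by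
        rw [b2, F.append, F.append, F.append,
          F.eq_nil (fun h => hat (mem_b2preL_sub h)) (fun h => hbt (mem_b2preL_sub h)),
          List.append_nil, F.cons, F.singleton,
          F.eq_nil (fun h => hat (mem_of_rootsOf h)) (fun h => hbt (mem_of_rootsOf h))]
      unfold Crit
      rw [e1, e2, e3]
    · -- a in subtree t, b in rest : cross pair
      have hat : a ∉ vertsL ts := fun h => hdisj _ ha _ h rfl
      have hbt : b ∉ verts t := fun h => hdisj _ h _ hb rfl
      have h1 : F (b1 t ++ b1L ts) a b = [a, b] := by
        rw [F.append, Fp_single (b1_perm t) hnt ha hbt, Fp_single' (b1L_perm ts) hns hat hb]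
        rfl
      have h3 : F (b3Lrev ts ++ b3 t) a b = [b, a] := by
        rw [F.append, Fp_single' (b3Lrev_perm ts) hns hat hb, Fp_single (b3_perm t) hnt ha hbt]
        rfl
      constructor
      · rintro (h | h) <;> rcases List.mem_append.1 h with h' | h'
        · exact absurd (mem_of_edges h').2 hbt
        · exact absurd (mem_of_edgesL h').1 hat
        · exact absurd (mem_of_edges h').1 hbt
        · exact absurd (mem_of_edgesL h').2 hat
      · rintro ⟨h12, h23⟩
        rw [h1] at h12
        rw [h3] at h23
        have := h12.trans h23
        simp at this
        exact absurd this.1 hab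
    · -- b in subtree t, a in rest
      have hbt : b ∉ vertsL ts := fun h => hdisj _ hb _ h rfl
      have hat : a ∉ verts t := fun h => hdisj _ h _ ha rfl
      have h1 : F (b1 t ++ b1L ts) a b = [b, a] := by
        rw [F.append, Fp_single' (b1_perm t) hnt hat hb, Fp_single (b1L_perm ts) hns ha hbt]
        rfl
      have h3 : F (b3Lrev ts ++ b3 t) a b = [a, b] := by
        rw [F.append, Fp_single (b3Lrev_perm ts) hns ha hbt, Fp_single' (b3_perm t) hnt hat hb]
        rfl
      constructor
      · rintro (h | h) <;> rcases List.mem_append.1 h with h' | h'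
        · exact absurd (mem_of_edges h').1 hat
        · exact absurd (mem_of_edgesL h').2 hbt
        · exact absurd (mem_of_edges h').2 hat
        · exact absurd (mem_of_edgesL h').1 hbt
      · rintro ⟨h12, h23⟩
        rw [h1] at h12
        rw [h3] at h23
        have := h12.trans h23
        simp at this
        exact absurd this.1 (Ne.symm hab)
    · -- both in rest
      have hat : a ∉ verts t := fun h => hdisj _ h _ ha rfl
      have hbt : b ∉ verts t := fun h => hdisj _ h _ hb rfl
      have hL : (((a, b) ∈ edges t ++ edgesL ts ∨ (b, a) ∈ edges t ++ edgesL ts) ↔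
          ((a, b) ∈ edgesL ts ∨ (b, a) ∈ edgesL ts)) := by
        simp only [List.mem_append]
        constructor
        · rintro ((h | h) | (h | h))
          exacts [absurd (mem_of_edges h).1 hat, Or.inl h,
            absurd (mem_of_edges h).1 hbt, Or.inr h]
        · tauto
      rw [hL, key_bL ts hns a b hab ha hb]
      have hroott : t.root ≠ a ∧ t.root ≠ b := by
        constructor <;> rintro rfl
        exacts [hat (root_mem t), hbt (root_mem t)]
      have e1 : F (b1 t ++ b1L ts) a b = F (b1L ts) a b := by
        rw [F.append, Fp_nil (b1_perm t) hat hbt, List.nil_append]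
      have e3 : F (b3Lrev ts ++ b3 t) a b = F (b3Lrev ts) a b := by
        rw [F.append, Fp_nil (b3_perm t) hat hbt, List.append_nil]
      have e2 : F ((b2pre t ++ b2preL ts) ++ (t.root :: rootsOf ts)) a b =
          F (b2preL ts ++ rootsOf ts) a b := by
        rw [F.append, F.append, F.cons_of_ne hroott.1 hroott.2,
          F.eq_nil (fun h => hat (mem_b2pre_sub h)) (fun h => hbt (mem_b2pre_sub h)),
          List.nil_append, F.append]
      unfold Crit
      rw [e1, e2, e3]

end


theorem crit_iff_chain {l1 l2 l3 : List V} {a b : V} (hab : a ≠ b)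
    (hn1 : l1.Nodup) (ha1 : a ∈ l1) (hb1 : b ∈ l1)
    (hn2 : l2.Nodup) (ha2 : a ∈ l2) (hb2 : b ∈ l2)
    (hn3 : l3.Nodup) (ha3 : a ∈ l3) (hb3 : b ∈ l3) :
    (F (l1 ++ l2 ++ l3) a b).Chain' (· ≠ ·) ↔ Crit l1 l2 l3 a b := by
  rw [F.append, F.append]
  rcases F.pair hn1 ha1 hb1 hab with h1 | h1 <;>
    rcases F.pair hn2 ha2 hb2 hab with h2 | h2 <;>
      rcases F.pair hn3 ha3 hb3 hab with h3 | h3 <;>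
        simp [Crit, h1, h2, h3, List.Chain', List.isChain_cons_cons, hab, Ne.symm hab]

section AddLeaf
variable {W : Type*}

mutual
def relabel (f : V → W) : PT V → PT W
  | .node r ts => .node (f r) (relabelL f ts)
def relabelL (f : V → W) : PTs V → PTs W
  | .nil => .nil
  | .cons t ts => .cons (relabel f t) (relabelL f ts)
end

theorem root_relabel (f : V → W) : ∀ t : PT V, (relabel f t).root = f t.root
  | .node r ts => rfl

mutual
theorem verts_relabel (f : V → W) : ∀ t : PT V, verts (relabel f t) = (verts t).map f
  | .node r ts => by
    rw [relabel, verts, verts, List.map_cons, vertsL_relabelL]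
theorem vertsL_relabelL (f : V → W) : ∀ ts : PTs V, vertsL (relabelL f ts) = (vertsL ts).map f
  | .nil => rfl
  | .cons t ts => by
    rw [relabelL, vertsL, vertsL, List.map_append, verts_relabel, vertsL_relabelL]
end

theorem rootsOf_relabelL (f : V → W) : ∀ ts : PTs V, rootsOf (relabelL f ts) = (rootsOf ts).map f
  | .nil => rfl
  | .cons t ts => by
    rw [relabelL, rootsOf, rootsOf, List.map_cons, rootsOf_relabelL, root_relabel]

theorem rootEdges_relabel (f : V → W) (r : V) : ∀ ts : PTs V,
    rootEdges (f r) (relabelL f ts) = (rootEdges r ts).map (Prod.map f f)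
  | .nil => rfl
  | .cons t ts => by
    rw [relabelL, rootEdges, rootEdges, List.map_cons, rootEdges_relabel, root_relabel]
    rfl

mutual
theorem edges_relabel (f : V → W) : ∀ t : PT V,
    edges (relabel f t) = (edges t).map (Prod.map f f)
  | .node r ts => by
    rw [relabel, edges, edges, List.map_append, rootEdges_relabel, edgesL_relabelL]
theorem edgesL_relabelL (f : V → W) : ∀ ts : PTs V,
    edgesL (relabelL f ts) = (edgesL ts).map (Prod.map f f)
  | .nil => rfl
  | .cons t ts => by
    rw [relabelL, edgesL, edgesL, List.map_append, edges_relabel, edgesL_relabelL]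
end

variable (u x : V)

mutual
def addLeaf : PT V → PT V
  | .node r ts =>
    if r = u then .node r (.cons (.node x .nil) (addLeafL ts))
    else .node r (addLeafL ts)
def addLeafL : PTs V → PTs V
  | .nil => .nil
  | .cons t ts => .cons (addLeaf t) (addLeafL ts)
end

variable {u x}

mutual
theorem addLeaf_id : ∀ t : PT V, u ∉ verts t → addLeaf u x t = t
  | .node r ts => by
    intro h
    rw [verts, List.mem_cons, not_or] at h
    rw [addLeaf, if_neg (Ne.symm h.1), addLeafL_id ts h.2]
theorem addLeafL_id : ∀ ts : PTs V, u ∉ vertsL ts → addLeafL u x ts = ts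
  | .nil => fun _ => rfl
  | .cons t ts => by
    intro h
    rw [vertsL, List.mem_append, not_or] at h
    rw [addLeafL, addLeaf_id t h.1, addLeafL_id ts h.2]
end

mutual
theorem verts_addLeaf : ∀ t : PT V, (verts t).Nodup → u ∈ verts t →
    (verts (addLeaf u x t)).Perm (x :: verts t)
  | .node r ts => by
    intro hn hu
    rw [verts, List.nodup_cons] at hn
    rw [verts, List.mem_cons] at hu
    by_cases hr : r = u
    · subst hr
      rw [addLeaf, if_pos rfl, addLeafL_id ts hn.1]
      refine perm_of_coe ?_
      simp only [verts, vertsL, List.nil_append, ← Multiset.coe_add, ← Multiset.cons_coe,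
        ← Multiset.singleton_add]
      abel
    · rw [addLeaf, if_neg hr]
      have hu' : u ∈ vertsL ts := hu.resolve_left (fun h => hr h.symm)
      refine perm_of_coe ?_
      have h := coe_of_perm (vertsL_addLeafL ts hn.2 hu')
      simp only [verts, vertsL, ← Multiset.coe_add, ← Multiset.cons_coe,
        ← Multiset.singleton_add] at h ⊢
      rw [h]
      abel
theorem vertsL_addLeafL : ∀ ts : PTs V, (vertsL ts).Nodup → u ∈ vertsL ts →
    (vertsL (addLeafL u x ts)).Perm (x :: vertsL ts)
  | .nil => by
    intro _ h
    simp [vertsL] at h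
  | .cons t ts => by
    intro hn hu
    rw [vertsL, List.nodup_append] at hn
    rw [vertsL, List.mem_append] at hu
    rw [addLeafL]
    rcases hu with hu | hu
    · rw [addLeafL_id ts (fun h => hn.2.2 _ hu _ h rfl)]
      refine perm_of_coe ?_
      have h := coe_of_perm (verts_addLeaf t hn.1 hu)
      simp only [verts, vertsL, ← Multiset.coe_add, ← Multiset.cons_coe,
        ← Multiset.singleton_add] at h ⊢
      rw [h]
      abel
    · rw [addLeaf_id t (fun h => hn.2.2 _ h _ hu rfl)]
      refine perm_of_coe ?_
      have h := coe_of_perm (vertsL_addLeafL ts hn.2.1 hu)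
      simp only [verts, vertsL, ← Multiset.coe_add, ← Multiset.cons_coe,
        ← Multiset.singleton_add] at h ⊢
      rw [h]
      abel
end

theorem rootsOf_addLeafL : ∀ ts : PTs V, rootsOf (addLeafL u x ts) = rootsOf ts
  | .nil => rfl
  | .cons t ts => by
    rw [addLeafL, rootsOf, rootsOf, rootsOf_addLeafL]
    congr 1
    rcases t with ⟨r, ts'⟩
    rw [addLeaf]
    split <;> rfl

mutual
theorem edges_addLeaf : ∀ t : PT V, ∀ p1 p2 : V, ((p1, p2) ∈ edges (addLeaf u x t) ↔
    ((p1, p2) = (u, x) ∧ u ∈ verts t) ∨ (p1, p2) ∈ edges t)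
  | .node r ts => by
    intro p1 p2
    have hrec : ∀ q1 q2 : V, ((q1, q2) ∈ edgesL (addLeafL u x ts) ↔
        ((q1, q2) = (u, x) ∧ u ∈ vertsL ts) ∨ (q1, q2) ∈ edgesL ts) :=
      edgesL_addLeafL ts
    by_cases hr : r = u
    · subst hr
      rw [addLeaf, if_pos rfl]
      simp only [Prod.mk.injEq] at hrec
      simp only [edges, edgesL, rootEdges, root, verts, List.mem_cons, List.mem_append,
        List.nil_append, List.mem_singleton, mem_rootEdges, rootsOf_addLeafL,
        hrec, Prod.mk.injEq, rootsOf]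
      tauto
    · have hr' : ¬u = r := fun h => hr h.symm
      rw [addLeaf, if_neg hr]
      simp only [Prod.mk.injEq] at hrec
      simp only [edges, edgesL, rootEdges, root, verts, List.mem_cons, List.mem_append,
        List.nil_append, List.mem_singleton, mem_rootEdges, rootsOf_addLeafL,
        hrec, Prod.mk.injEq, rootsOf]
      tauto
theorem edgesL_addLeafL : ∀ ts : PTs V, ∀ p1 p2 : V, ((p1, p2) ∈ edgesL (addLeafL u x ts) ↔
    ((p1, p2) = (u, x) ∧ u ∈ vertsL ts) ∨ (p1, p2) ∈ edgesL ts)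
  | .nil => by
    intro p1 p2
    rw [addLeafL]
    simp [edgesL, vertsL]
  | .cons t ts => by
    intro p1 p2
    have h1 : (p1, p2) ∈ edges (addLeaf u x t) ↔
        ((p1, p2) = (u, x) ∧ u ∈ verts t) ∨ (p1, p2) ∈ edges t := edges_addLeaf t p1 p2
    have h2 : (p1, p2) ∈ edgesL (addLeafL u x ts) ↔
        ((p1, p2) = (u, x) ∧ u ∈ vertsL ts) ∨ (p1, p2) ∈ edgesL ts := edgesL_addLeafL ts p1 p2
    rw [addLeafL, edgesL, edgesL, vertsL]
    simp only [List.mem_append, h1, h2]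
    tauto
end

end AddLeaf

end PT

section GraphSide

open SimpleGraph

variable {V : Type u} [DecidableEq V] [Fintype V]

theorem exists_leaf (T : SimpleGraph V) (hT : T.IsTree) (h2 : 1 < Fintype.card V) :
    ∃ x u : V, T.Adj x u ∧ ∀ w, T.Adj x w → w = u := by
  classical
  have hdeg : ∀ v : V, 0 < T.degree v := by
    intro v
    rw [SimpleGraph.degree_pos_iff_exists_adj]
    obtain ⟨w, hw⟩ := Fintype.exists_ne_of_one_lt_card h2 v
    obtain ⟨p⟩ := hT.1.preconnected v w
    cases p with
    | nil => exact absurd rfl hw.symm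
    | cons h _ => exact ⟨_, h⟩
  have hsum : ∑ v : V, T.degree v = 2 * T.edgeFinset.card :=
    SimpleGraph.sum_degrees_eq_twice_card_edges T
  have hE : T.edgeFinset.card + 1 = Fintype.card V := hT.card_edgeFinset
  have hlow : ∃ v : V, T.degree v < 2 := by
    by_contra hh
    push_neg at hh
    have h1 : Fintype.card V * 2 ≤ ∑ v : V, T.degree v := by
      have := Finset.sum_le_sum (fun (i : V) (_ : i ∈ Finset.univ) => hh i)
      simpa [Finset.sum_const, Finset.card_univ, mul_comm] using this
    omega
  obtain ⟨v, hv⟩ := hlow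
  have hcard1 : (T.neighborFinset v).card = 1 := by
    have := hdeg v
    have h' : T.degree v = 1 := by omega
    exact h'
  obtain ⟨u, hu⟩ := Finset.card_eq_one.1 hcard1
  refine ⟨v, u, ?_, ?_⟩
  · have : u ∈ T.neighborFinset v := by
      rw [hu]
      exact Finset.mem_singleton_self u
    exact (SimpleGraph.mem_neighborFinset T v u).1 this
  · intro w hw
    have : w ∈ T.neighborFinset v := (SimpleGraph.mem_neighborFinset T v w).2 hw
    rw [hu, Finset.mem_singleton] at this
    exact this

theorem reach_induce (T : SimpleGraph V) (x u : V) (huniq : ∀ w, T.Adj x w → w = u) :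
    ∀ {c d : V} (w : T.Walk c d), w.IsPath → ∀ (hc : c ≠ x) (hd : d ≠ x),
      (T.induce {y | y ≠ x}).Reachable ⟨c, hc⟩ ⟨d, hd⟩ := by
  intro c d w
  induction w with
  | nil =>
    intro _ hc hd
    exact SimpleGraph.Reachable.refl _
  | @cons c m d h q ih =>
    intro hp hc hd
    by_cases hm : m = x
    · subst hm
      exfalso
      have hcu : c = u := huniq c h.symm
      cases q with
      | nil => exact hd rfl
      | @cons _ m2 _ h2 q2 =>
        have hm2 : m2 = u := huniq _ h2
        have hsup := hp.support_nodup
        rw [SimpleGraph.Walk.support_cons, SimpleGraph.Walk.support_cons,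
          List.nodup_cons] at hsup
        exact hsup.1 (List.mem_cons_of_mem _ (by
          rw [hcu, ← hm2]
          exact SimpleGraph.Walk.start_mem_support q2))
    · have hadj : (T.induce {y | y ≠ x}).Adj ⟨c, hc⟩ ⟨m, hm⟩ := h
      exact hadj.reachable.trans (ih hp.of_cons hm hd)

theorem exists_PT : ∀ (n : ℕ) (V : Type u) [DecidableEq V] [Fintype V]
    (T : SimpleGraph V), Fintype.card V = n → T.IsTree →
    ∃ t : PT V, (PT.verts t).Nodup ∧ (∀ y, y ∈ PT.verts t) ∧
      (∀ a b : V, T.Adj a b ↔ ((a, b) ∈ PT.edges t ∨ (b, a) ∈ PT.edges t)) := by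
  intro n
  induction n using Nat.strong_induction_on with
  | _ n ih =>
    intro V _ _ T hcard hT
    rcases lt_or_ge 1 (Fintype.card V) with h2 | h2
    · -- inductive step: remove a leaf
      obtain ⟨x, u, hadj, huniq⟩ := exists_leaf T hT h2
      set s : Set V := {y | y ≠ x} with hs
      haveI : DecidablePred (· ∈ s) := fun y => by
        rw [hs]
        exact instDecidableNot
      have hux : u ≠ x := hadj.ne'
      have hcards : Fintype.card s = n - 1 := by
        have h1 : Fintype.card s = Fintype.card {y : V // ¬y = x} :=
          Fintype.card_congr (Equiv.subtypeEquivRight (fun y => Iff.rfl))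
        rw [h1, Fintype.card_subtype_compl, Fintype.card_subtype_eq, hcard]
      have hconn : (T.induce s).Connected := by
        rw [SimpleGraph.connected_iff]
        constructor
        · rintro ⟨a, ha⟩ ⟨b, hb⟩
          obtain ⟨w⟩ := hT.1.preconnected a b
          exact reach_induce T x u huniq (w.toPath : T.Path a b).1
            (w.toPath : T.Path a b).2 ha hb
        · exact ⟨⟨u, hux⟩⟩
      have hacyc : (T.induce s).IsAcyclic := by
        intro v c hc
        have f : T.induce s ↪g T :=
          (T.induceUnivIso.toEmbedding).comp (T.induceHomOfLE (Set.subset_univ s))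
        exact hT.2 (c.map f.toHom) (hc.map f.injective)
      obtain ⟨t', hn', hall', hadj'⟩ := ih (n - 1) (by omega) s (T.induce s) hcards ⟨hconn, hacyc⟩
      set t'' : PT V := PT.relabel Subtype.val t' with ht''
      have hverts'' : PT.verts t'' = (PT.verts t').map Subtype.val := PT.verts_relabel _ t'
      have hn'' : (PT.verts t'').Nodup := by
        rw [hverts'']
        exact hn'.map Subtype.val_injective
      have hxnot : x ∉ PT.verts t'' := by
        rw [hverts'']
        rintro hmem
        obtain ⟨⟨y, hy⟩, -, heq⟩ := List.mem_map.1 hmem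
        exact hy heq
      have humem : u ∈ PT.verts t'' := by
        rw [hverts'']
        exact List.mem_map.2 ⟨⟨u, hux⟩, hall' _, rfl⟩
      refine ⟨PT.addLeaf u x t'', ?_, ?_, ?_⟩
      · rw [(PT.verts_addLeaf t'' hn'' humem).nodup_iff]
        exact List.nodup_cons.2 ⟨hxnot, hn''⟩
      · intro y
        rw [(PT.verts_addLeaf t'' hn'' humem).mem_iff]
        by_cases hy : y = x
        · exact hy ▸ List.mem_cons_self
        · refine List.mem_cons_of_mem _ ?_
          rw [hverts'']
          exact List.mem_map.2 ⟨⟨y, hy⟩, hall' _, rfl⟩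
      · intro a b
        have hedge'' : ∀ c d : V, ((c, d) ∈ PT.edges t'' ↔
            ∃ (hc : c ≠ x) (hd : d ≠ x), (⟨c, hc⟩, (⟨d, hd⟩ : s)) ∈ PT.edges t') := by
          intro c d
          rw [ht'', PT.edges_relabel]
          constructor
          · intro hmem
            obtain ⟨⟨⟨c', hc'⟩, ⟨d', hd'⟩⟩, hmem', heq⟩ := List.mem_map.1 hmem
            obtain ⟨rfl, rfl⟩ : c' = c ∧ d' = d := by
              constructor <;> [exact congrArg Prod.fst heq; exact congrArg Prod.snd heq]
            exact ⟨hc', hd', hmem'⟩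
          · rintro ⟨hc, hd, hmem⟩
            exact List.mem_map.2 ⟨_, hmem, rfl⟩
        have hAL : ∀ c d : V, ((c, d) ∈ PT.edges (PT.addLeaf u x t'') ↔
            ((c = u ∧ d = x) ∧ u ∈ PT.verts t'') ∨ (c, d) ∈ PT.edges t'') := by
          intro c d
          rw [PT.edges_addLeaf (u := u) (x := x) t'' c d, Prod.mk.injEq]
        constructor
        · intro hadj2
          by_cases hax : a = x
          · have hbu : b = u := huniq b (hax ▸ hadj2)
            exact Or.inr ((hAL b a).2 (Or.inl ⟨⟨hbu, hax⟩, humem⟩))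
          · by_cases hbx : b = x
            · have hau : a = u := huniq a (hbx ▸ hadj2.symm)
              exact Or.inl ((hAL a b).2 (Or.inl ⟨⟨hau, hbx⟩, humem⟩))
            · have h' : (T.induce s).Adj ⟨a, hax⟩ ⟨b, hbx⟩ := hadj2
              rcases (hadj' _ _).1 h' with h | h
              · exact Or.inl ((hAL a b).2 (Or.inr ((hedge'' a b).2 ⟨hax, hbx, h⟩)))
              · exact Or.inr ((hAL b a).2 (Or.inr ((hedge'' b a).2 ⟨hbx, hax, h⟩)))
        · rintro (h | h)
          · rcases (hAL a b).1 h with ⟨⟨rfl, rfl⟩, -⟩ | h'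
            · exact hadj.symm
            · obtain ⟨hc, hd, hmem⟩ := (hedge'' a b).1 h'
              exact (hadj' ⟨a, hc⟩ ⟨b, hd⟩).2 (Or.inl hmem)
          · rcases (hAL b a).1 h with ⟨⟨rfl, rfl⟩, -⟩ | h'
            · exact hadj
            · obtain ⟨hc, hd, hmem⟩ := (hedge'' b a).1 h'
              exact (hadj' ⟨a, hd⟩ ⟨b, hc⟩).2 (Or.inr hmem)
    · -- base case: exactly one vertex
      haveI : Nonempty V := hT.1.nonempty
      have h1 : Fintype.card V = 1 := le_antisymm h2 Fintype.card_pos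
      obtain ⟨v, hv⟩ := Fintype.card_eq_one_iff.1 h1
      refine ⟨PT.node v PTs.nil, ?_, ?_, ?_⟩
      · simp [PT.verts, PT.vertsL]
      · intro y
        rw [hv y]
        simp [PT.verts, PT.vertsL]
      · intro a b
        have : a = b := (hv a).trans (hv b).symm
        subst this
        simp [PT.edges, PT.rootEdges, PT.edgesL, SimpleGraph.irrefl]

end GraphSide

/-- Letters `a` and `b` alternate in the word `w` if the subword of `w` obtained by
keeping only the occurrences of `a` and `b` has no two equal consecutive letters. -/
def Alternates {V : Type*} [DecidableEq V] (w : List V) (a b : V) : Prop :=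
  (w.filter fun x => decide (x = a ∨ x = b)).Chain' (· ≠ ·)

/-- The word `w` represents the simple graph `G`: distinct vertices are adjacent
iff they alternate in `w`. -/
def Represents {V : Type*} [DecidableEq V] (w : List V) (G : SimpleGraph V) : Prop :=
  ∀ a b : V, a ≠ b → (G.Adj a b ↔ Alternates w a b)

/-- The list `p` is a permutation of the type `V`: it has no duplicates and
contains every element of `V`. -/
def IsPermList {V : Type*} (p : List V) : Prop :=
  p.Nodup ∧ ∀ x : V, x ∈ p

/-- `a` precedes `b` in the list `p`. -/
def Precedes {V : Type*} [DecidableEq V] (p : List V) (a b : V) : Prop :=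
  p.idxOf a < p.idxOf b

/-- The permutation-representation number of `G`: the least `k ≥ 1` such that `G` is
represented by a concatenation of `k` permutations of its vertex set. -/
noncomputable def prn {V : Type*} [DecidableEq V] (G : SimpleGraph V) : ℕ :=
  sInf {k | 0 < k ∧ ∃ ps : List (List V), ps.length = k ∧
    (∀ p ∈ ps, IsPermList p) ∧ Represents ps.flatten G}

theorem perm_isPermList {V : Type*} {l m : List V} (h : l.Perm m)
    (hn : m.Nodup) (hall : ∀ y : V, y ∈ m) : IsPermList l :=
  ⟨h.nodup_iff.2 hn, fun y => h.mem_iff.2 (hall y)⟩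

/-- Every tree is represented by a concatenation of three permutations of its vertex
set; in particular, the permutation-representation number of a tree is at most 3. -/
theorem tree_prn_le_three {V : Type*} [DecidableEq V] [Fintype V]
    (T : SimpleGraph V) (hT : T.IsTree) :
    (∃ p₁ p₂ p₃ : List V, IsPermList p₁ ∧ IsPermList p₂ ∧ IsPermList p₃ ∧
      Represents (p₁ ++ p₂ ++ p₃) T) ∧ prn T ≤ 3 := by
  obtain ⟨t, hnod, hall, hadj⟩ := exists_PT (Fintype.card V) V T rfl hT
  have hp1 : IsPermList (PT.a1 t) := perm_isPermList (PT.a1_perm t) hnod hall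
  have hp2 : IsPermList (PT.a2 t) := perm_isPermList (PT.a2_perm t) hnod hall
  have hp3 : IsPermList (PT.a3 t) := by
    have := PT.a3_perm t
    rw [← PT.a3] at this
    exact perm_isPermList this hnod hall
  have hrep : Represents (PT.a1 t ++ PT.a2 t ++ PT.a3 t) T := by
    intro a b hab
    rw [hadj a b]
    have hkey := PT.key_a t hnod a b hab (hall a) (hall b)
    have halt : Alternates (PT.a1 t ++ PT.a2 t ++ PT.a3 t) a b ↔
        PT.Crit (PT.a1 t) (PT.a2 t) (PT.a3 t) a b :=
      PT.crit_iff_chain hab hp1.1 (hp1.2 a) (hp1.2 b) hp2.1 (hp2.2 a) (hp2.2 b)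
        hp3.1 (hp3.2 a) (hp3.2 b)
    exact hkey.trans halt.symm
  refine ⟨⟨PT.a1 t, PT.a2 t, PT.a3 t, hp1, hp2, hp3, hrep⟩, ?_⟩
  apply Nat.sInf_le
  refine ⟨by norm_num, [PT.a1 t, PT.a2 t, PT.a3 t], rfl, ?_, ?_⟩
  · intro p hp
    simp only [List.mem_cons, List.not_mem_nil, or_false] at hp
    rcases hp with rfl | rfl | rfl
    exacts [hp1, hp2, hp3]
  · have hfl : [PT.a1 t, PT.a2 t, PT.a3 t].flatten = PT.a1 t ++ PT.a2 t ++ PT.a3 t := by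
      simp
    rw [hfl]
    exact hrep
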